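/- Let β > 1 and x ∈ I_β = [-β/(β+1), 1/(β+1)). Define the digit sequence x_i = ⌊-β T_{-β}^{i-1}(x) + β/(β+1)⌋ for i ≥ 1. Then x = Σ_{i≥1} x_i / (-β)^i. -/

import Mathlib

/-- The `(-β)`-transformation. -/
noncomputable def Tm (β x : ℝ) : ℝ := -β * x - ⌊-β * x + β / (β + 1)⌋

/-- The digits of the `(-β)`-expansion of `x`, 0-indexed: `dig β x n = x_{n+1}`,
where `x_i = ⌊-β T_{-β}^{i-1}(x) + β/(β+1)⌋`. -/
noncomputable def dig (β x : ℝ) (n : ℕ) : ℤ := ⌊-β * (Tm β)^[n] x + β / (β + 1)⌋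

lemma Tm_mem (β : ℝ) (hβ : 1 < β) (x : ℝ) :
    Tm β x ∈ Set.Ico (-β / (β + 1)) (1 / (β + 1)) := by
  have hb1 : (0:ℝ) < β + 1 := by linarith
  have h : Tm β x = Int.fract (-β * x + β / (β + 1)) - β / (β + 1) := by
    rw [Int.fract, Tm]; ring
  have hf0 := Int.fract_nonneg (-β * x + β / (β + 1))
  have hf1 := Int.fract_lt_one (-β * x + β / (β + 1))
  have heq : (1:ℝ) / (β + 1) = 1 - β / (β + 1) := by field_simp; ring
  constructor
  · rw [h, neg_div]; linarith
  · rw [h, heq]; linarith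

lemma iter_mem (β : ℝ) (hβ : 1 < β) (x : ℝ)
    (hx : x ∈ Set.Ico (-β / (β + 1)) (1 / (β + 1))) (n : ℕ) :
    (Tm β)^[n] x ∈ Set.Ico (-β / (β + 1)) (1 / (β + 1)) := by
  induction n with
  | zero => exact hx
  | succ n ih => rw [Function.iterate_succ_apply']; exact Tm_mem β hβ _

lemma iter_abs_le (β : ℝ) (hβ : 1 < β) (x : ℝ)
    (hx : x ∈ Set.Ico (-β / (β + 1)) (1 / (β + 1))) (n : ℕ) :
    |(Tm β)^[n] x| ≤ 1 := by
  obtain ⟨h1, h2⟩ := iter_mem β hβ x hx n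
  have hb1 : (0:ℝ) < β + 1 := by linarith
  have ha : -β / (β + 1) ≥ -1 := by
    rw [ge_iff_le, neg_div, neg_le_neg_iff, div_le_one hb1]; linarith
  have hb : (1:ℝ) / (β + 1) ≤ 1 := by rw [div_le_one hb1]; linarith
  rw [abs_le]; constructor <;> linarith

lemma partial_sum (β : ℝ) (hβ : 1 < β) (x : ℝ) (n : ℕ) :
    ∑ k ∈ Finset.range n, (dig β x k : ℝ) / (-β) ^ (k + 1)
      = x - (Tm β)^[n] x / (-β) ^ n := by
  have hβ0 : (-β) ≠ 0 := by intro h; nlinarith [neg_eq_zero.mp h]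
  induction n with
  | zero => simp
  | succ n ih =>
    rw [Finset.sum_range_succ, ih, Function.iterate_succ_apply']
    have hstep : Tm β ((Tm β)^[n] x) = -β * (Tm β)^[n] x - (dig β x n : ℝ) := by
      rw [Tm, dig]
    rw [hstep]
    field_simp
    ring

theorem stmt2 (β : ℝ) (hβ : 1 < β) (x : ℝ)
    (hx : x ∈ Set.Ico (-β / (β + 1)) (1 / (β + 1))) :
    HasSum (fun n : ℕ => (dig β x n : ℝ) / (-β) ^ (n + 1)) x := by
  have hβ0 : (0:ℝ) < β := by linarith
  have hβ1 : (1:ℝ)/β < 1 := by rw [div_lt_one hβ0]; exact hβ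
  have hβinv : (0:ℝ) ≤ 1/β := by positivity
  -- digit bound
  have hdig : ∀ n, |(dig β x n : ℝ)| ≤ β + 1 := by
    intro n
    have hm := iter_abs_le β hβ x hx n
    have h1 : (dig β x n : ℝ) ≤ -β * (Tm β)^[n] x + β / (β + 1) :=
      Int.floor_le _
    have h2 : -β * (Tm β)^[n] x + β / (β + 1) < (dig β x n : ℝ) + 1 := by
      rw [dig]; exact Int.lt_floor_add_one _
    have hb1 : (0:ℝ) < β + 1 := by linarith
    have hc : (0:ℝ) ≤ β / (β + 1) := by positivity
    have hc' : β / (β + 1) ≤ 1 := by rw [div_le_one hb1]; linarith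
    have habs : |(-β) * (Tm β)^[n] x| ≤ β := by
      rw [abs_mul, abs_neg, abs_of_pos hβ0]
      nlinarith [abs_nonneg ((Tm β)^[n] x)]
    rw [abs_le] at habs ⊢
    constructor <;> linarith [habs.1, habs.2]
  -- summability
  have hgeo : Summable (fun n : ℕ => (β + 1) * (1/β) ^ (n + 1)) := by
    apply Summable.mul_left
    exact (summable_geometric_of_lt_one hβinv hβ1).comp_injective
      (add_left_injective 1)
  have hle : ∀ n : ℕ, |(dig β x n : ℝ) / (-β) ^ (n + 1)|
      ≤ (β + 1) * (1/β) ^ (n + 1) := by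
    intro n
    rw [abs_div, abs_pow, abs_neg, abs_of_pos hβ0, div_eq_mul_inv, ← inv_pow,
      ← one_div]
    exact mul_le_mul_of_nonneg_right (hdig n) (by positivity)
  have hsum : Summable (fun n : ℕ => (dig β x n : ℝ) / (-β) ^ (n + 1)) :=
    Summable.of_abs (Summable.of_nonneg_of_le (fun n => abs_nonneg _) hle hgeo)
  rw [hsum.hasSum_iff_tendsto_nat]
  have heq : ∀ n, ∑ k ∈ Finset.range n, (dig β x k : ℝ) / (-β) ^ (k + 1)
      = x - (Tm β)^[n] x / (-β) ^ n := fun n => partial_sum β hβ x n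
  simp only [heq]
  have htail : Filter.Tendsto (fun n : ℕ => (Tm β)^[n] x / (-β) ^ n)
      Filter.atTop (nhds 0) := by
    apply squeeze_zero_norm (a := fun n : ℕ => (1/β) ^ n)
    · intro n
      have hp : ((1:ℝ)/β)^n = 1 / β^n := by rw [div_pow, one_pow]
      rw [Real.norm_eq_abs, abs_div, abs_pow, abs_neg, abs_of_pos hβ0, hp]
      gcongr
      exact iter_abs_le β hβ x hx n
    · exact tendsto_pow_atTop_nhds_zero_of_lt_one hβinv hβ1
  simpa using Filter.Tendsto.const_sub x htail
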